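/- Every nonempty irreducible closed subset X of the terminal space S(M) has a unique generic point: there exists a unique I ∈ S(M) such that X equals the closure of the singleton {I} in the terminal space. -/
import Mathlib


/-- An ideal of a commutative monoid `M`: a subset closed under
multiplication by arbitrary elements of `M`. -/
def IsIdealM {M : Type*} [CommMonoid M] (I : Set M) : Prop :=
  ∀ x ∈ I, ∀ m : M, x * m ∈ I

/-- A strongly irreducible ideal: a proper ideal `I` such that for all ideals
`J`, `K`, if `J ∩ K ⊆ I` then `J ⊆ I` or `K ⊆ I`. -/
def IsStronglyIrr {M : Type*} [CommMonoid M] (I : Set M) : Prop :=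
  IsIdealM I ∧ I ≠ Set.univ ∧
    ∀ J K : Set M, IsIdealM J → IsIdealM K → J ∩ K ⊆ I → J ⊆ I ∨ K ⊆ I

/-- A prime ideal of a commutative monoid. -/
def IsPrimeIdealM {M : Type*} [CommMonoid M] (P : Set M) : Prop :=
  IsIdealM P ∧ P ≠ Set.univ ∧ ∀ x y : M, x * y ∈ P → x ∈ P ∨ y ∈ P

/-- A maximal ideal of a commutative monoid: a proper ideal maximal among
proper ideals. -/
def IsMaximalIdealM {M : Type*} [CommMonoid M] (I : Set M) : Prop :=
  IsIdealM I ∧ I ≠ Set.univ ∧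
    ∀ J : Set M, IsIdealM J → J ≠ Set.univ → I ⊆ J → J = I

/-- `SIr M` is the set (type) of strongly irreducible ideals of `M`. -/
structure SIr (M : Type*) [CommMonoid M] where
  carrier : Set M
  strongly_irr : IsStronglyIrr carrier

namespace SIr

variable {M : Type*} [CommMonoid M]

@[ext] theorem ext {I J : SIr M} (h : I.carrier = J.carrier) : I = J := by
  cases I; cases J; simpa using h

/-- `KK X = ⋂_{I ∈ X} I`, the kernel of a set of strongly irreducible ideals. -/
def KK (X : Set (SIr M)) : Set M := ⋂ I ∈ X, I.carrier

/-- The hull-kernel operator `HK`: for nonempty `X`,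
`HK X = {J ∈ S(M) : K(X) ⊆ J}`, and `HK ∅ = ∅`. -/
def HK (X : Set (SIr M)) : Set (SIr M) :=
  {J : SIr M | X.Nonempty ∧ KK X ⊆ J.carrier}

theorem HK_empty : HK (∅ : Set (SIr M)) = ∅ := by
  ext J
  simp [HK, Set.not_nonempty_empty]

theorem mem_HK_of_nonempty {X : Set (SIr M)} (hX : X.Nonempty) {J : SIr M} :
    J ∈ HK X ↔ KK X ⊆ J.carrier :=
  ⟨fun h => h.2, fun h => ⟨hX, h⟩⟩

theorem KK_antitone {X X' : Set (SIr M)} (h : X ⊆ X') : KK X' ⊆ KK X := by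
  intro m hm
  simp only [KK, Set.mem_iInter] at hm ⊢
  exact fun I hI => hm I (h hI)

theorem KK_isIdeal (X : Set (SIr M)) : IsIdealM (KK X) := by
  intro x hx m
  simp only [KK, Set.mem_iInter] at hx ⊢
  exact fun I hI => I.strongly_irr.1 x (hx I hI) m

theorem subset_HK (X : Set (SIr M)) : X ⊆ HK X := by
  intro J hJ
  refine ⟨⟨J, hJ⟩, fun m hm => ?_⟩
  simp only [KK, Set.mem_iInter] at hm
  exact hm J hJ

theorem HK_mono {X X' : Set (SIr M)} (h : X ⊆ X') : HK X ⊆ HK X' := by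
  rintro J ⟨hne, hsub⟩
  exact ⟨hne.mono h, (KK_antitone h).trans hsub⟩

theorem HK_idem (X : Set (SIr M)) : HK (HK X) = HK X := by
  refine Set.Subset.antisymm ?_ (subset_HK _)
  rintro J ⟨hne, hsub⟩
  obtain ⟨I, hI⟩ := hne
  refine ⟨hI.1, Set.Subset.trans ?_ hsub⟩
  intro m hm
  simp only [KK, Set.mem_iInter]
  exact fun L hL => hL.2 hm

theorem HK_union (X X' : Set (SIr M)) : HK (X ∪ X') = HK X ∪ HK X' := by
  rcases X.eq_empty_or_nonempty with rfl | hX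
  · rw [Set.empty_union, HK_empty, Set.empty_union]
  rcases X'.eq_empty_or_nonempty with rfl | hX'
  · rw [Set.union_empty, HK_empty, Set.union_empty]
  refine Set.Subset.antisymm ?_
    (Set.union_subset (HK_mono Set.subset_union_left)
      (HK_mono Set.subset_union_right))
  rintro J ⟨-, hsub⟩
  have hKK : KK X ∩ KK X' ⊆ J.carrier := by
    refine Set.Subset.trans ?_ hsub
    intro m hm
    simp only [KK, Set.mem_iInter, Set.mem_inter_iff] at hm ⊢
    rintro I (hI | hI)
    · exact hm.1 I hI
    · exact hm.2 I hI
  rcases J.strongly_irr.2.2 (KK X) (KK X') (KK_isIdeal X) (KK_isIdeal X') hKK with h | h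
  · exact Or.inl ⟨hX, h⟩
  · exact Or.inr ⟨hX', h⟩

/-- The terminal-space (Zariski) topology on `SIr M`: the closed sets are
exactly the sets of the form `HK X`. -/
instance instTopologicalSpace : TopologicalSpace (SIr M) :=
  TopologicalSpace.ofClosed (Set.range HK)
    ⟨∅, HK_empty⟩
    (fun A hA => by
      refine ⟨⋂₀ A, Set.Subset.antisymm (Set.subset_sInter fun C hC => ?_) (subset_HK _)⟩
      obtain ⟨Y, hY⟩ := hA hC
      calc HK (⋂₀ A) ⊆ HK C := HK_mono (Set.sInter_subset_of_mem hC)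
        _ = HK (HK Y) := by rw [hY]
        _ = HK Y := HK_idem Y
        _ = C := hY)
    (fun A hA B hB => by
      obtain ⟨Y, hY⟩ := hA
      obtain ⟨Z, hZ⟩ := hB
      exact ⟨Y ∪ Z, by rw [HK_union, hY, hZ]⟩)

theorem isClosed_iff {C : Set (SIr M)} : IsClosed C ↔ ∃ X, HK X = C := by
  rw [← isOpen_compl_iff]
  show Cᶜᶜ ∈ Set.range HK ↔ _
  rw [compl_compl]
  exact Iff.rfl

end SIr

namespace SIr

variable {M : Type*} [CommMonoid M]

theorem HK_isClosed (X : Set (SIr M)) : IsClosed (HK X) :=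
  isClosed_iff.2 ⟨X, rfl⟩

theorem KK_singleton (I : SIr M) : KK ({I} : Set (SIr M)) = I.carrier := by
  simp [KK]

theorem closure_singleton (I : SIr M) :
    closure ({I} : Set (SIr M)) = {J : SIr M | I.carrier ⊆ J.carrier} := by
  have h1 : HK ({I} : Set (SIr M)) = {J : SIr M | I.carrier ⊆ J.carrier} := by
    ext J
    rw [mem_HK_of_nonempty (Set.singleton_nonempty I), KK_singleton]
    rfl
  refine Set.Subset.antisymm ?_ ?_
  · rw [← h1]
    exact closure_minimal (subset_HK _) (HK_isClosed _)
  · obtain ⟨Y, hY⟩ := isClosed_iff.1 (isClosed_closure (s := ({I} : Set (SIr M))))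
    intro L hL
    have hI : I ∈ HK Y := by rw [hY]; exact subset_closure rfl
    rw [← hY]
    exact ⟨hI.1, hI.2.trans hL⟩

end SIr

/-- every nonempty irreducible closed subset of the terminal
space has a unique generic point. -/
theorem unique_generic_point (M : Type*) [CommMonoid M]
    (X : Set (SIr M)) (hne : X.Nonempty) (hirr : IsIrreducible X)
    (hcl : IsClosed X) :
    ∃! I : SIr M, X = closure {I} := by
  classical
  obtain ⟨Y, hY⟩ := SIr.isClosed_iff.1 hcl
  have hYne : Y.Nonempty := by
    rcases Y.eq_empty_or_nonempty with rfl | h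
    · rw [SIr.HK_empty] at hY
      exact absurd hY.symm (Set.nonempty_iff_ne_empty.1 hne)
    · exact h
  -- KK X = KK Y
  have hKK : SIr.KK X = SIr.KK Y := by
    refine Set.Subset.antisymm (SIr.KK_antitone ?_) ?_
    · rw [← hY]; exact SIr.subset_HK Y
    · intro m hm
      simp only [SIr.KK, Set.mem_iInter] at hm ⊢
      intro L hL
      rw [← hY] at hL
      exact hL.2 (by simp only [SIr.KK, Set.mem_iInter]; exact hm)
  have hmemX : ∀ L : SIr M, L ∈ X ↔ SIr.KK X ⊆ L.carrier := by
    intro L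
    constructor
    · intro hL m hm
      simp only [SIr.KK, Set.mem_iInter] at hm
      exact hm L hL
    · intro h
      rw [← hY]
      exact ⟨hYne, by rw [← hKK]; exact h⟩
  -- KK X is strongly irreducible
  have hSI : IsStronglyIrr (SIr.KK X) := by
    refine ⟨SIr.KK_isIdeal X, ?_, ?_⟩
    · obtain ⟨J, hJ⟩ := hne
      intro h
      have : J.carrier = Set.univ :=
        Set.eq_univ_of_univ_subset (h ▸ (hmemX J).1 hJ)
      exact J.strongly_irr.2.1 this
    · intro J K hJ hK hJK
      set X1 : Set (SIr M) := {L ∈ X | J ⊆ L.carrier} with hX1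
      set X2 : Set (SIr M) := {L ∈ X | K ⊆ L.carrier} with hX2
      have hcover : X ⊆ SIr.HK X1 ∪ SIr.HK X2 := by
        intro L hL
        have hsub : J ∩ K ⊆ L.carrier := hJK.trans ((hmemX L).1 hL)
        rcases L.strongly_irr.2.2 J K hJ hK hsub with h | h
        · exact Or.inl (SIr.subset_HK X1 ⟨hL, h⟩)
        · exact Or.inr (SIr.subset_HK X2 ⟨hL, h⟩)
      have := (isPreirreducible_iff_isClosed_union_isClosed.1 hirr.2)
        (SIr.HK X1) (SIr.HK X2) (SIr.HK_isClosed X1) (SIr.HK_isClosed X2) hcover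
      rcases this with h | h
      · left
        intro m hm
        simp only [SIr.KK, Set.mem_iInter]
        intro L hL
        exact (h hL).2 (by
          simp only [SIr.KK, Set.mem_iInter]
          exact fun L' hL' => hL'.2 hm)
      · right
        intro m hm
        simp only [SIr.KK, Set.mem_iInter]
        intro L hL
        exact (h hL).2 (by
          simp only [SIr.KK, Set.mem_iInter]
          exact fun L' hL' => hL'.2 hm)
  refine ⟨⟨SIr.KK X, hSI⟩, ?_, ?_⟩
  · ext L
    rw [SIr.closure_singleton]
    exact hmemX L
  · intro I' hI'
    have hI'X : I' ∈ X := by rw [hI', SIr.closure_singleton]; exact Set.Subset.rfl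
    apply SIr.ext
    refine Set.Subset.antisymm ?_ ((hmemX I').1 hI'X)
    intro m hm
    simp only [SIr.KK, Set.mem_iInter] at hm ⊢
    intro L hL
    rw [hI', SIr.closure_singleton] at hL
    exact hL hm
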